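/- Let X and C be chain complexes over a commutative ring of characteristic 2, and suppose Π: X → C and I: C → X are chain maps with Π∘I = id_C and I∘Π = id_X + d(Q) for some homotopy Q: X → X (where d(Q) = d_X∘Q + Q∘d_X). Define Q' = (1 + I∘Π)∘Q∘(1 + I∘Π) and H = Q'∘d_X∘Q'. Then (Π, I, H) is a strong deformation retraction: Π∘I = id_C, I∘Π = id_X + d(H), H∘H = 0, H∘I = 0, and Π∘H = 0. -/
import Mathlib

section aux

lemma char2_add_self {R M N : Type*} [CommRing R] [CharP R 2]
    [AddCommGroup M] [AddCommGroup N] [Module R M] [Module R N]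
    (f : M →ₗ[R] N) : f + f = 0 := by
  have h2 : ((2 : ℕ) : R) = 0 := CharP.cast_eq_zero R 2
  have : (2 : R) • f = 0 := by
    rw [show (2 : R) = ((2 : ℕ) : R) by norm_num, h2, zero_smul]
  simpa [two_smul] using this

/-- Abstract Lambe–Stasheff computation in a (noncommutative) ring of
characteristic 2. -/
lemma sdr_key {A : Type*} [Ring A] (h2 : ∀ a : A, a + a = 0)
    (d e q : A) (hdd : d * d = 0) (hde : d * e = e * d) (hee : e * e = e)
    (hs : d * q + q * d = e) :
    d * (e * (q * e) * (d * (e * (q * e)))) +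
      e * (q * e) * (d * (e * (q * e))) * d = e ∧
    e * (q * e) * (d * (e * (q * e))) * (e * (q * e) * (d * (e * (q * e)))) = 0 := by
  set q' : A := e * (q * e) with hq'
  have hmov : ∀ a b : A, a + b = 0 → a = b := by
    intro a b h
    have := congrArg (· + b) h
    simpa [add_assoc, h2] using this
  have heq' : e * q' = q' := by rw [hq', ← mul_assoc, hee]
  have hq'e : q' * e = q' := by
    calc q' * e = e * (q * (e * e)) := by rw [hq']; noncomm_ring
      _ = q' := by rw [hee, hq']
  have hdq' : d * q' + q' * d = e := by
    have t1 : d * q' = e * (d * q * e) := by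
      rw [hq', ← mul_assoc, hde, mul_assoc, ← mul_assoc d q e]
    have t2 : q' * d = e * (q * d * e) := by
      rw [hq', mul_assoc, mul_assoc q e d, ← hde, ← mul_assoc q d e]
    rw [t1, t2, ← mul_add, ← add_mul, hs, hee, hee]
  have hdq2 : d * q' = e + q' * d := by
    apply hmov
    calc d * q' + (e + q' * d) = (d * q' + q' * d) + e := by abel
      _ = e + e := by rw [hdq']
      _ = 0 := h2 e
  have hdqd : d * q' * d = e * d := by
    rw [hdq2, add_mul, mul_assoc, hdd, mul_zero, add_zero]
  constructor
  · have hdh : d * (q' * (d * q')) = e * d * q' := by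
      calc d * (q' * (d * q')) = (d * q' * d) * q' := by noncomm_ring
        _ = e * d * q' := by rw [hdqd]
    have hhd : q' * (d * q') * d = q' * (e * d) := by
      calc q' * (d * q') * d = q' * (d * q' * d) := by noncomm_ring
        _ = q' * (e * d) := by rw [hdqd]
    calc d * (q' * (d * q')) + q' * (d * q') * d
        = e * d * q' + q' * (e * d) := by rw [hdh, hhd]
      _ = d * (e * q') + (q' * e) * d := by
          have a1 : e * d * q' = d * (e * q') := by rw [← hde, mul_assoc]
          have a2 : q' * (e * d) = (q' * e) * d := (mul_assoc q' e d).symm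
          rw [a1, a2]
      _ = d * q' + q' * d := by rw [heq', hq'e]
      _ = e := hdq'
  · have hm : (d * q') * (q' * d) = 0 := by
      calc (d * q') * (q' * d) = (e + q' * d) * (q' * d) := by rw [hdq2]
        _ = e * q' * d + q' * (d * q' * d) := by noncomm_ring
        _ = e * q' * d + q' * (e * d) := by rw [hdqd]
        _ = (e * q') * d + (q' * e) * d := by rw [mul_assoc, ← mul_assoc q' e d]
        _ = q' * d + q' * d := by rw [heq', hq'e]
        _ = 0 := h2 _
    calc q' * (d * q') * (q' * (d * q'))
        = q' * ((d * q') * (q' * d)) * q' := by noncomm_ring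
      _ = 0 := by rw [hm, mul_zero, zero_mul]

end aux

/-- Lambe–Stasheff side conditions: if `Π∘I = id` and `I∘Π = id + d(Q)` for chain
complexes over a commutative ring of characteristic 2, then with
`Q' = (1 + IΠ)∘Q∘(1 + IΠ)` and `H = Q'∘d∘Q'` the data `(Π, I, H)` is a strong
deformation retraction. -/
theorem stmt_9 {R X C : Type*} [CommRing R] [CharP R 2]
    [AddCommGroup X] [AddCommGroup C] [Module R X] [Module R C]
    (dX : X →ₗ[R] X) (dC : C →ₗ[R] C)
    (hdX : dX ∘ₗ dX = 0) (hdC : dC ∘ₗ dC = 0)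
    (P : X →ₗ[R] C) (I : C →ₗ[R] X)
    (hP : dC ∘ₗ P = P ∘ₗ dX) (hI : dX ∘ₗ I = I ∘ₗ dC)
    (hPI : P ∘ₗ I = LinearMap.id)
    (Q : X →ₗ[R] X)
    (hIP : I ∘ₗ P = LinearMap.id + (dX ∘ₗ Q + Q ∘ₗ dX)) :
    letI Q' : X →ₗ[R] X :=
      (LinearMap.id + I ∘ₗ P) ∘ₗ Q ∘ₗ (LinearMap.id + I ∘ₗ P)
    letI H : X →ₗ[R] X := Q' ∘ₗ dX ∘ₗ Q'
    P ∘ₗ I = LinearMap.id ∧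
    I ∘ₗ P = LinearMap.id + (dX ∘ₗ H + H ∘ₗ dX) ∧
    H ∘ₗ H = 0 ∧ H ∘ₗ I = 0 ∧ P ∘ₗ H = 0 := by
  have h2 : ∀ f : X →ₗ[R] X, f + f = 0 := fun f => char2_add_self f
  -- hypotheses in multiplicative (endomorphism ring) form
  have hdd : dX * dX = 0 := by rw [Module.End.mul_eq_comp]; exact hdX
  have hdE : dX * (I ∘ₗ P) = (I ∘ₗ P) * dX := by
    rw [Module.End.mul_eq_comp, Module.End.mul_eq_comp, ← LinearMap.comp_assoc,
      hI, LinearMap.comp_assoc, hP, ← LinearMap.comp_assoc]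
  have hde : dX * (1 + I ∘ₗ P) = (1 + I ∘ₗ P) * dX := by
    rw [mul_add, add_mul, mul_one, one_mul, hdE]
  have hEE : (I ∘ₗ P) * (I ∘ₗ P) = I ∘ₗ P := by
    rw [Module.End.mul_eq_comp, LinearMap.comp_assoc,
      ← LinearMap.comp_assoc P I P, hPI, LinearMap.id_comp]
  have hee : (1 + I ∘ₗ P) * (1 + I ∘ₗ P) = 1 + I ∘ₗ P := by
    calc (1 + I ∘ₗ P) * (1 + I ∘ₗ P)
        = 1 + (I ∘ₗ P + I ∘ₗ P) + (I ∘ₗ P) * (I ∘ₗ P) := by noncomm_ring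
      _ = 1 + I ∘ₗ P := by rw [h2, hEE, add_zero]
  have hIP' : I ∘ₗ P = 1 + (dX * Q + Q * dX) := by
    simpa [Module.End.mul_eq_comp, Module.End.one_eq_id] using hIP
  have hs : dX * Q + Q * dX = 1 + I ∘ₗ P := by
    rw [hIP', ← add_assoc, h2, zero_add]
  obtain ⟨k1, k2⟩ := sdr_key h2 dX (1 + I ∘ₗ P) Q hdd hde hee hs
  -- side annihilation facts
  have heI0 : ((1 : X →ₗ[R] X) + I ∘ₗ P) ∘ₗ I = 0 := by
    rw [Module.End.one_eq_id, LinearMap.add_comp, LinearMap.id_comp,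
      LinearMap.comp_assoc, hPI, LinearMap.comp_id, char2_add_self]
  have hPe0 : P ∘ₗ ((1 : X →ₗ[R] X) + I ∘ₗ P) = 0 := by
    rw [Module.End.one_eq_id, LinearMap.comp_add, LinearMap.comp_id,
      ← LinearMap.comp_assoc, hPI, LinearMap.id_comp, char2_add_self]
  refine ⟨hPI, ?_, ?_, ?_, ?_⟩ <;>
    simp only [← Module.End.one_eq_id, ← Module.End.mul_eq_comp]
  · rw [k1, ← add_assoc, h2, zero_add]
  · exact k2
  · have h4 : (1 + I ∘ₗ P) * (Q * (1 + I ∘ₗ P)) *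
        (dX * ((1 + I ∘ₗ P) * (Q * (1 + I ∘ₗ P))))
        = ((1 + I ∘ₗ P) * (Q * ((1 + I ∘ₗ P) * (dX * ((1 + I ∘ₗ P) * Q)))))
            * (1 + I ∘ₗ P) := by noncomm_ring
    rw [h4, Module.End.mul_eq_comp, LinearMap.comp_assoc, heI0,
      LinearMap.comp_zero]
  · have h5 : (1 + I ∘ₗ P) * (Q * (1 + I ∘ₗ P)) *
        (dX * ((1 + I ∘ₗ P) * (Q * (1 + I ∘ₗ P))))
        = (1 + I ∘ₗ P) *
            (Q * ((1 + I ∘ₗ P) * (dX * ((1 + I ∘ₗ P) * (Q * (1 + I ∘ₗ P)))))) := by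
      noncomm_ring
    rw [h5, Module.End.mul_eq_comp, ← LinearMap.comp_assoc, hPe0,
      LinearMap.zero_comp]
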